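/- Let Σ be a finite alphabet, v ∈ Σ* a word, and Γ ⊆ Σ. Then a word w ∈ Σ* belongs to the shuffle v ⧢ Γ* if and only if v is a subsequence of w and, for every letter a ∈ Σ \ Γ, the number of occurrences of a in w equals the number of occurrences of a in v. Consequently, v ⧢ Γ* = (v ⧢ Σ*) ∩ complement( ⋃_{a ∈ Σ\Γ} (comm(va) ⧢ Σ*) ). -/

import Mathlib

/-- `IsShuffle u v w` holds iff `w` is an interleaving (shuffle) of `u` and `v`,
i.e., `w = u₀v₀u₁v₁⋯u_kv_k` for factorizations `u = u₀u₁⋯u_k`, `v = v₀v₁⋯v_k`. -/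
inductive IsShuffle {α : Type*} : List α → List α → List α → Prop
  | nil : IsShuffle [] [] []
  | left (a : α) {u v w : List α} : IsShuffle u v w → IsShuffle (a :: u) v (a :: w)
  | right (a : α) {u v w : List α} : IsShuffle u v w → IsShuffle u (a :: v) (a :: w)

/-- The shuffle `v ⧢ K` of a word `v` with a language `K`. -/
def shuffleWithLang {α : Type*} (v : List α) (K : Set (List α)) : Set (List α) :=
  { w | ∃ u ∈ K, IsShuffle v u w }

/-- The shuffle `K₁ ⧢ K₂` of two languages. -/
def langShuffle {α : Type*} (K₁ K₂ : Set (List α)) : Set (List α) :=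
  { w | ∃ u ∈ K₁, ∃ x ∈ K₂, IsShuffle u x w }

/-- `comm u` is the set of words having the same number of occurrences of every
letter as `u`. -/
def commClass {α : Type*} [DecidableEq α] (u : List α) : Set (List α) :=
  { w | ∀ a : α, w.count a = u.count a }

lemma IsShuffle.sublist_left {α : Type*} {u v w : List α} (h : IsShuffle u v w) :
    u.Sublist w := by
  induction h with
  | nil => exact List.Sublist.refl _
  | left a _ ih => exact ih.cons₂ a
  | right a _ ih => exact ih.cons a

lemma IsShuffle.count_eq {α : Type*} [DecidableEq α] {u v w : List α}
    (h : IsShuffle u v w) (a : α) : w.count a = u.count a + v.count a := by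
  induction h with
  | nil => simp
  | left b _ ih => simp [List.count_cons, ih]; ring
  | right b _ ih => simp [List.count_cons, ih]; ring

lemma exists_shuffle_of_sublist {α : Type*} {u w : List α} (h : u.Sublist w) :
    ∃ v, IsShuffle u v w := by
  induction h with
  | slnil => exact ⟨[], .nil⟩
  | cons a _ ih => obtain ⟨v, hv⟩ := ih; exact ⟨a :: v, .right a hv⟩
  | cons_cons a _ ih => obtain ⟨v, hv⟩ := ih; exact ⟨v, .left a hv⟩

lemma exists_sublist_count {α : Type*} [DecidableEq α] (w : List α) (f : α → ℕ)
    (h : ∀ a, f a ≤ w.count a) : ∃ u : List α, u.Sublist w ∧ ∀ a, u.count a = f a := by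
  induction w generalizing f with
  | nil =>
    refine ⟨[], List.Sublist.refl _, fun a => ?_⟩
    have := h a; simp at this ⊢; omega
  | cons b t ih =>
    by_cases hb : f b = 0
    · obtain ⟨u, hu, hc⟩ := ih f (fun a => by
        by_cases hab : a = b
        · subst hab; omega
        · have := h a; simpa [List.count_cons, hab, Ne.symm hab] using this)
      exact ⟨u, hu.trans (List.sublist_cons_self b t), hc⟩
    · obtain ⟨u, hu, hc⟩ := ih (fun a => if a = b then f a - 1 else f a) (fun a => by
        by_cases hab : a = b
        · subst hab; have := h a; simp [List.count_cons] at this ⊢; omega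
        · have := h a; simp only [if_neg hab]; simpa [List.count_cons, hab, Ne.symm hab] using this)
      refine ⟨b :: u, hu.cons₂ b, fun a => ?_⟩
      by_cases hab : a = b
      · subst hab; have := hc a; simp at this; simp [List.count_cons, this]; omega
      · have := hc a; simp [hab] at this; simp [List.count_cons, hab, Ne.symm hab, this]

/-- A word `w` belongs to `v ⧢ Γ*` iff `v` is a subsequence of `w` and, for every
letter `a ∈ Σ \ Γ`, the number of occurrences of `a` in `w` equals that in `v`.
Consequently, `v ⧢ Γ* = (v ⧢ Σ*) ∩ (⋃_{a ∈ Σ\Γ} comm(va) ⧢ Σ*)ᶜ`. -/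
theorem stmt_13 {α : Type*} [Fintype α] [DecidableEq α] (v : List α) (Γ : Set α) :
    (∀ w : List α,
        w ∈ shuffleWithLang v { u | ∀ c ∈ u, c ∈ Γ } ↔
          (v.Sublist w ∧ ∀ a : α, a ∉ Γ → w.count a = v.count a)) ∧
      shuffleWithLang v { u | ∀ c ∈ u, c ∈ Γ } =
        shuffleWithLang v Set.univ ∩
          (⋃ a ∈ { a : α | a ∉ Γ }, langShuffle (commClass (v ++ [a])) Set.univ)ᶜ := by
  have key : ∀ w : List α,
      w ∈ shuffleWithLang v { u | ∀ c ∈ u, c ∈ Γ } ↔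
        (v.Sublist w ∧ ∀ a : α, a ∉ Γ → w.count a = v.count a) := by
    intro w
    constructor
    · rintro ⟨u, hu, hs⟩
      refine ⟨hs.sublist_left, fun a ha => ?_⟩
      have h1 := hs.count_eq a
      have h2 : u.count a = 0 := List.count_eq_zero.mpr (fun hm => ha (hu a hm))
      omega
    · rintro ⟨hsub, hcnt⟩
      obtain ⟨u, hs⟩ := exists_shuffle_of_sublist hsub
      refine ⟨u, fun c hc => ?_, hs⟩
      by_contra hcΓ
      have h1 := hs.count_eq c
      have h2 := hcnt c hcΓ
      have h3 : 0 < u.count c := List.count_pos_iff.mpr hc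
      omega
  have mem_univ_shuffle : ∀ w : List α,
      w ∈ shuffleWithLang v Set.univ ↔ v.Sublist w := by
    intro w
    constructor
    · rintro ⟨u, -, hs⟩; exact hs.sublist_left
    · intro h; obtain ⟨u, hs⟩ := exists_shuffle_of_sublist h
      exact ⟨u, trivial, hs⟩
  have mem_comm : ∀ (a : α) (w : List α),
      w ∈ langShuffle (commClass (v ++ [a])) Set.univ ↔
        ∀ b, (v ++ [a]).count b ≤ w.count b := by
    intro a w
    constructor
    · rintro ⟨u, hu, x, -, hs⟩ b
      have := hs.count_eq b
      have := hu b
      omega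
    · intro h
      obtain ⟨u, hu, hc⟩ := exists_sublist_count w (fun b => (v ++ [a]).count b) h
      obtain ⟨x, hx⟩ := exists_shuffle_of_sublist hu
      exact ⟨u, hc, x, trivial, hx⟩
  refine ⟨key, ?_⟩
  ext w
  rw [key w]
  simp only [Set.mem_inter_iff, Set.mem_compl_iff, Set.mem_iUnion, Set.mem_setOf_eq,
    mem_univ_shuffle, not_exists]
  constructor
  · rintro ⟨hsub, hcnt⟩
    refine ⟨hsub, fun a ha hmem => ?_⟩
    rw [mem_comm] at hmem
    have h1 := hmem a
    have h2 := hcnt a ha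
    simp [List.count_append, List.count_cons] at h1
    omega
  · rintro ⟨hsub, h⟩
    refine ⟨hsub, fun a ha => ?_⟩
    have h1 := hsub.count_le a
    have h2 := h a ha
    rw [mem_comm] at h2
    push_neg at h2
    obtain ⟨b, hb⟩ := h2
    by_cases hab : b = a
    · subst hab; simp [List.count_append] at hb; omega
    · exfalso
      have := hsub.count_le b
      simp [List.count_append, List.count_cons, hab, Ne.symm hab] at hb
      omega
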